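/- Let (A, Con, Δ) be a normal default structure with trivial entailment such that every information state has a unique extension. Then the derived skeptical nonmonotonic consequence relation |~_A satisfies cautious monotony: for every finite consistent X and tokens a, b, if X |~_A {a} and X |~_A {b}, then X ∪ {a} |~_A {b}. -/

import Mathlib

/-- A set is consistent if every finite subset of it lies in Con. -/
def IsCons {α : Type*} (Con : Set α → Prop) (S : Set α) : Prop :=
  ∀ X : Set α, X ⊆ S → X.Finite → Con X

/-- With trivial entailment: φ(x, S, 0) = x and
φ(x, S, i+1) = φ(x, S, i) ∪ {a | (X, a) ∈ Δ, X ⊆ φ(x, S, i), {a} ∪ S consistent}. -/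
def phiT {α : Type*} (Con : Set α → Prop) (Δ : Set (Set α × α)) (x S : Set α) :
    ℕ → Set α
  | 0 => x
  | i + 1 =>
      phiT Con Δ x S i ∪
        {a | ∃ X : Set α, (X, a) ∈ Δ ∧ X ⊆ phiT Con Δ x S i ∧ IsCons Con ({a} ∪ S)}

/-- Φ(x, S) = ⋃_{i≥0} φ(x, S, i). -/
def PhiT {α : Type*} (Con : Set α → Prop) (Δ : Set (Set α × α)) (x S : Set α) : Set α :=
  ⋃ i, phiT Con Δ x S i

/-- A consistent set y is an extension of x (x ε y) if Φ(x, y) = y. -/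
def ExtT {α : Type*} (Con : Set α → Prop) (Δ : Set (Set α × α)) (x y : Set α) : Prop :=
  IsCons Con y ∧ PhiT Con Δ x y = y

/-- Skeptical nonmonotonic consequence: X |~ a iff a belongs to every extension of X. -/
def Nmc {α : Type*} (Con : Set α → Prop) (Δ : Set (Set α × α)) (X : Set α) (a : α) : Prop :=
  ∀ y : Set α, ExtT Con Δ X y → a ∈ y

/-- X |~ Y iff X |~ b for every b ∈ Y. -/
def NmcS {α : Type*} (Con : Set α → Prop) (Δ : Set (Set α × α)) (X Y : Set α) : Prop :=
  ∀ b ∈ Y, Nmc Con Δ X b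


lemma phiT_mono_succ {α : Type*} (Con : Set α → Prop) (Δ : Set (Set α × α)) (x S : Set α)
    (i : ℕ) : phiT Con Δ x S i ⊆ phiT Con Δ x S (i + 1) := by
  intro c hc; exact Or.inl hc

lemma phiT_mono {α : Type*} (Con : Set α → Prop) (Δ : Set (Set α × α)) (x S : Set α) :
    Monotone (phiT Con Δ x S) :=
  monotone_nat_of_le_succ (phiT_mono_succ Con Δ x S)

lemma phiT_mono_x {α : Type*} (Con : Set α → Prop) (Δ : Set (Set α × α)) {x x' : Set α}
    (S : Set α) (h : x ⊆ x') : ∀ i, phiT Con Δ x S i ⊆ phiT Con Δ x' S i := by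
  intro i
  induction i with
  | zero => exact h
  | succ i ih =>
      rintro c (hc | ⟨Z, hZΔ, hZ, hcons⟩)
      · exact Or.inl (ih hc)
      · exact Or.inr ⟨Z, hZΔ, hZ.trans ih, hcons⟩

lemma finite_subset_phiT {α : Type*} (Con : Set α → Prop) (Δ : Set (Set α × α))
    (x S : Set α) {Z : Set α} (hZf : Z.Finite) (hZ : Z ⊆ PhiT Con Δ x S) :
    ∃ j, Z ⊆ phiT Con Δ x S j := by
  revert hZ
  refine Set.Finite.induction_on (motive := fun Z _ => Z ⊆ PhiT Con Δ x S → ∃ j, Z ⊆ phiT Con Δ x S j)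
    Z hZf (fun _ => ⟨0, by simp⟩) ?_
  intro c Z' _ _ ih hZ
  obtain ⟨j, hj⟩ := ih (fun t ht => hZ (Set.mem_insert_of_mem c ht))
  obtain ⟨T, ⟨k, rfl⟩, hck⟩ := hZ (Set.mem_insert c Z')
  exact ⟨max j k, Set.insert_subset
    (phiT_mono Con Δ x S (le_max_right j k) hck)
    (hj.trans (phiT_mono Con Δ x S (le_max_left j k)))⟩

/-- if every information state has a unique extension, then |~_A satisfies
cautious monotony: X |~ {a} and X |~ {b} imply X ∪ {a} |~ {b}. -/
theorem unique_extension_cautious_monotony {α : Type*} (Con : Set α → Prop)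
    (Δ : Set (Set α × α))
    -- Con is a collection of finite subsets of A with ∅ ∈ Con, closed under
    -- subsets, containing every singleton
    (hCfin : ∀ X : Set α, Con X → X.Finite)
    (hCempty : Con ∅)
    (hCsub : ∀ X Y : Set α, X ⊆ Y → Con Y → Con X)
    (hCsing : ∀ a : α, Con {a})
    -- Δ is a set of normal default rules, each a pair (X, a) with X ∈ Con
    (hDelta : ∀ p ∈ Δ, Con p.1)
    -- every information state has a unique extension
    (huniq : ∀ x : Set α, IsCons Con x → ∃! y : Set α, ExtT Con Δ x y) :
    ∀ (X : Set α) (a b : α), Con X →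
      Nmc Con Δ X a → Nmc Con Δ X b → Nmc Con Δ (X ∪ {a}) b := by
  intro X a b hX ha hb
  have hXc : IsCons Con X := fun Z hZ _ => hCsub Z X hZ hX
  obtain ⟨y, hy, hyu⟩ := huniq X hXc
  have hay : a ∈ y := ha y hy
  have hby : b ∈ y := hb y hy
  have hXy : X ⊆ y := by
    have := hy.2
    intro t ht
    rw [← this]
    exact Set.mem_iUnion.2 ⟨0, ht⟩
  -- y is an extension of X ∪ {a}
  have hsub : ∀ i, phiT Con Δ (X ∪ {a}) y i ⊆ y := by
    intro i
    induction i with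
    | zero => exact Set.union_subset hXy (by simpa using hay)
    | succ i ih =>
        rintro c (hc | ⟨Z, hZΔ, hZ, hcons⟩)
        · exact ih hc
        · have hZfin : Z.Finite := hCfin Z (hDelta (Z, c) hZΔ)
          have hZy : Z ⊆ PhiT Con Δ X y := by rw [hy.2]; exact hZ.trans ih
          obtain ⟨j, hj⟩ := finite_subset_phiT Con Δ X y hZfin hZy
          have : c ∈ phiT Con Δ X y (j + 1) := Or.inr ⟨Z, hZΔ, hj, hcons⟩
          rw [← hy.2]
          exact Set.mem_iUnion.2 ⟨j + 1, this⟩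
  have hyext : ExtT Con Δ (X ∪ {a}) y := by
    refine ⟨hy.1, Set.Subset.antisymm ?_ ?_⟩
    · exact Set.iUnion_subset hsub
    · have h2 : PhiT Con Δ X y ⊆ PhiT Con Δ (X ∪ {a}) y :=
        Set.iUnion_mono fun i => phiT_mono_x Con Δ y Set.subset_union_left i
      rw [hy.2] at h2
      exact h2
  intro z hz
  have hXaz : X ∪ {a} ⊆ z := by
    have := hz.2
    intro t ht
    rw [← this]
    exact Set.mem_iUnion.2 ⟨0, ht⟩
  have hXa : IsCons Con (X ∪ {a}) := fun Z hZ hZf => hz.1 Z (hZ.trans hXaz) hZf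
  obtain ⟨w, _, hwu⟩ := huniq (X ∪ {a}) hXa
  rw [hwu z hz, ← hwu y hyext]
  exact hby
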